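/- The function f(t) = (2/√π)·√t − 2t·e^t·erfc(√t) satisfies ∫₀^∞ e^{-qt} f(t) dt = 1/(√q·(√q+1)²) for all q > 0. -/

import Mathlib

open Real MeasureTheory

/-- The complementary error function `erfc(x) = (2/√π) ∫ₓ^∞ e^{-u²} du`. -/
noncomputable def erfc (x : ℝ) : ℝ :=
  2 / Real.sqrt Real.pi * ∫ u in Set.Ioi x, Real.exp (-u ^ 2)

section Aux
open Set

lemma gamma32 : Real.Gamma (3/2) = Real.sqrt Real.pi / 2 := by
  have h : (3/2 : ℝ) = 1/2 + 1 := by norm_num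
  rw [h, Real.Gamma_add_one (by norm_num), Real.Gamma_one_half_eq]; ring

lemma gamma52 : Real.Gamma (5/2) = 3 * Real.sqrt Real.pi / 4 := by
  have h : (5/2 : ℝ) = 3/2 + 1 := by norm_num
  rw [h, Real.Gamma_add_one (by norm_num), gamma32]; ring

-- L1
lemma int_sqrt_exp {b : ℝ} (hb : 0 < b) :
    ∫ t in Ioi (0:ℝ), Real.sqrt t * Real.exp (-b * t)
      = b ^ (-(3/2) : ℝ) * (Real.sqrt Real.pi / 2) := by
  have := integral_rpow_mul_exp_neg_mul_rpow (p := 1) (q := 1/2) (b := b)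
    one_pos (by norm_num) hb
  rw [show ∫ x in Ioi (0:ℝ), x ^ (1/2:ℝ) * Real.exp (-b * x ^ (1:ℝ))
      = ∫ t in Ioi (0:ℝ), Real.sqrt t * Real.exp (-b * t) from
    setIntegral_congr_fun measurableSet_Ioi (fun x hx => by
      rw [Real.rpow_one, ← Real.sqrt_eq_rpow])] at this
  rw [this, show (-(1/2+1)/1 : ℝ) = -(3/2) by norm_num,
    show ((1/2+1)/1 : ℝ) = 3/2 by norm_num, gamma32]
  ring

-- L2
lemma int_sq_gauss {b : ℝ} (hb : 0 < b) :
    ∫ u in Ioi (0:ℝ), u ^ 2 * Real.exp (-b * u ^ 2)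
      = b ^ (-(3/2) : ℝ) * (Real.sqrt Real.pi / 4) := by
  have := integral_rpow_mul_exp_neg_mul_rpow (p := 2) (q := 2) (b := b)
    two_pos (by norm_num) hb
  rw [show ∫ x in Ioi (0:ℝ), x ^ (2:ℝ) * Real.exp (-b * x ^ (2:ℝ))
      = ∫ u in Ioi (0:ℝ), u ^ 2 * Real.exp (-b * u ^ 2) from
    setIntegral_congr_fun measurableSet_Ioi (fun x hx => by
      rw [show (2:ℝ) = ((2:ℕ):ℝ) by norm_num, Real.rpow_natCast])] at this
  rw [this, show (-(2+1)/2 : ℝ) = -(3/2) by norm_num,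
    show ((2+1)/2 : ℝ) = 3/2 by norm_num, gamma32]
  ring

-- L4
lemma int_quart_gauss :
    ∫ u in Ioi (0:ℝ), u ^ 4 * Real.exp (-u ^ 2) = 3 * Real.sqrt Real.pi / 8 := by
  have := integral_rpow_mul_exp_neg_mul_rpow (p := 2) (q := 4) (b := 1)
    two_pos (by norm_num) one_pos
  rw [show ∫ x in Ioi (0:ℝ), x ^ (4:ℝ) * Real.exp (-1 * x ^ (2:ℝ))
      = ∫ u in Ioi (0:ℝ), u ^ 4 * Real.exp (-u ^ 2) from
    setIntegral_congr_fun measurableSet_Ioi (fun x hx => by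
      rw [show (2:ℝ) = ((2:ℕ):ℝ) by norm_num, show (4:ℝ) = ((4:ℕ):ℝ) by norm_num,
        Real.rpow_natCast, Real.rpow_natCast, neg_one_mul])] at this
  rw [this, show ((4+1)/2 : ℝ) = 5/2 by norm_num, gamma52, Real.one_rpow]
  ring

lemma int_texp {c a : ℝ} (hc : c ≠ 0) (ha : 0 ≤ a) :
    ∫ t in Ioo (0:ℝ) a, t * Real.exp (c * t)
      = (Real.exp (c * a) * (c * a - 1) + 1) / c ^ 2 := by
  rw [← integral_Ioc_eq_integral_Ioo, ← intervalIntegral.integral_of_le ha]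
  have : ∫ t in (0:ℝ)..a, t * Real.exp (c * t)
      = (Real.exp (c*a) * (c*a - 1) / c^2) - (Real.exp (c*0) * (c*0 - 1) / c^2) := by
    apply intervalIntegral.integral_eq_sub_of_hasDerivAt
    · intro x hx
      have h1 : HasDerivAt (fun t : ℝ => Real.exp (c * t)) (c * Real.exp (c * x)) x := by
        simpa [mul_comm] using ((hasDerivAt_id x).const_mul c).exp
      have h2 : HasDerivAt (fun t : ℝ => c * t - 1) c x := by
        simpa using ((hasDerivAt_id x).const_mul c).sub_const 1
      have := (h1.mul h2).div_const (c^2)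
      refine this.congr_deriv ?_
      rw [div_eq_iff (pow_ne_zero 2 hc)]
      ring
    · exact (continuous_id.mul (Real.continuous_exp.comp (continuous_const.mul continuous_id))).intervalIntegrable 0 a
  rw [this]
  simp
  ring

lemma int_t_Ioo {a : ℝ} (ha : 0 ≤ a) :
    ∫ t in Ioo (0:ℝ) a, t = a ^ 2 / 2 := by
  rw [← integral_Ioc_eq_integral_Ioo, ← intervalIntegral.integral_of_le ha,
    integral_id]
  ring

lemma swap_lemma (q : ℝ) (hq : 0 < q) :
    IntegrableOn (fun t => (t * Real.exp ((1 - q) * t)) * ∫ u in Ioi (Real.sqrt t), Real.exp (-u ^ 2)) (Ioi (0:ℝ)) ∧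
    (∫ t in Ioi (0:ℝ), (t * Real.exp ((1 - q) * t)) * ∫ u in Ioi (Real.sqrt t), Real.exp (-u ^ 2))
      = ∫ u in Ioi (0:ℝ), Real.exp (-u ^ 2) * ∫ t in Ioo (0:ℝ) (u ^ 2), t * Real.exp ((1 - q) * t) := by
  set S : Set (ℝ × ℝ) := {p | 0 < p.1 ∧ Real.sqrt p.1 < p.2} with hSdef
  set φ : ℝ × ℝ → ℝ := fun p => p.1 * Real.exp ((1 - q) * p.1) * Real.exp (-p.2 ^ 2) with hφdef
  set F : ℝ × ℝ → ℝ := S.indicator φ with hFdef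
  have hS : MeasurableSet S := by
    apply (measurableSet_lt measurable_const measurable_fst).inter
    exact measurableSet_lt (Real.continuous_sqrt.measurable.comp measurable_fst) measurable_snd
  have hφm : Measurable φ := by
    apply (measurable_fst.mul ?_).mul ?_
    · exact (Real.continuous_exp.measurable).comp (measurable_const.mul measurable_fst)
    · exact (Real.continuous_exp.measurable).comp ((measurable_snd.pow_const 2).neg)
  have hFm : Measurable F := hφm.indicator hS
  set α : ℝ := min q 1 / 2 with hαdef
  have hα0 : 0 < α := by positivity
  have hα1 : α ≤ 1 := by
    rw [hαdef]; nlinarith [min_le_right q 1]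
  have hqα : 0 < q - α := by
    rw [hαdef]; nlinarith [min_le_left q 1]
  set B : ℝ × ℝ → ℝ := fun p =>
    (Ioi (0:ℝ)).indicator (fun t => t * Real.exp (-(q - α) * t)) p.1
      * Real.exp (-α * p.2 ^ 2) with hBdef
  have hB1 : Integrable ((Ioi (0:ℝ)).indicator (fun t => t * Real.exp (-(q - α) * t))) := by
    rw [integrable_indicator_iff measurableSet_Ioi]
    have := integrableOn_rpow_mul_exp_neg_mul_rpow (p := 1) (s := 1) (b := q - α)
      (by norm_num) one_pos hqα
    simpa [Real.rpow_one] using this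
  have hB : Integrable B (volume.prod volume) :=
    Integrable.mul_prod hB1 (integrable_exp_neg_mul_sq hα0)
  have hbound : ∀ p : ℝ × ℝ, ‖F p‖ ≤ B p := by
    intro p
    by_cases hp : p ∈ S
    · have ht := hp.1
      have hu := hp.2
      have hu0 : 0 < p.2 := lt_of_le_of_lt (Real.sqrt_nonneg _) hu
      have htu : p.1 < p.2 ^ 2 := (Real.sqrt_lt' hu0).mp hu
      rw [hFdef, Set.indicator_of_mem hp, hBdef]
      simp only
      rw [Set.indicator_of_mem (by exact ht : p.1 ∈ Ioi (0:ℝ))]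
      have hnorm : ‖φ p‖ = φ p := by
        rw [Real.norm_eq_abs, abs_of_nonneg]; positivity
      rw [hnorm, hφdef]
      simp only
      rw [mul_assoc, mul_assoc, ← Real.exp_add, ← Real.exp_add]
      apply mul_le_mul_of_nonneg_left _ ht.le
      apply Real.exp_le_exp.mpr
      nlinarith
    · rw [hFdef, Set.indicator_of_notMem hp, norm_zero, hBdef]
      apply mul_nonneg _ (Real.exp_nonneg _)
      apply Set.indicator_nonneg
      intro t ht
      have : (0:ℝ) < t := ht
      positivity
  have hF : Integrable F (volume.prod volume) :=
    hB.mono' hFm.aestronglyMeasurable (Filter.Eventually.of_forall hbound)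
  have hswap := integral_integral_swap (f := fun t u => F (t, u)) hF
  have hfun : (fun t : ℝ => ∫ u : ℝ, F (t, u)) =
      (Ioi (0:ℝ)).indicator
        (fun t => (t * Real.exp ((1 - q) * t)) * ∫ u in Ioi (Real.sqrt t), Real.exp (-u ^ 2)) := by
    funext t
    by_cases ht : (0:ℝ) < t
    · rw [Set.indicator_of_mem (by exact ht)]
      have : ∀ u : ℝ, F (t, u) =
          (Ioi (Real.sqrt t)).indicator (fun u => (t * Real.exp ((1 - q) * t)) * Real.exp (-u ^ 2)) u := by
        intro u
        by_cases hu : Real.sqrt t < u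
        · rw [hFdef, Set.indicator_of_mem (by exact ⟨ht, hu⟩), Set.indicator_of_mem (by exact hu)]
        · rw [hFdef, Set.indicator_of_notMem (by simp [hSdef, ht, hu]),
            Set.indicator_of_notMem (by exact hu)]
      simp_rw [this]
      rw [integral_indicator measurableSet_Ioi, integral_const_mul]
    · rw [Set.indicator_of_notMem (by exact ht)]
      have : ∀ u : ℝ, F (t, u) = 0 := by
        intro u
        rw [hFdef, Set.indicator_of_notMem]
        intro h
        exact ht h.1
      simp [this]
  have hInt : IntegrableOn
      (fun t => (t * Real.exp ((1 - q) * t)) * ∫ u in Ioi (Real.sqrt t), Real.exp (-u ^ 2)) (Ioi (0:ℝ)) := by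
    have := hF.integral_prod_left
    rw [show (fun t : ℝ => ∫ u : ℝ, F (t, u) ∂volume) = (fun t : ℝ => ∫ u : ℝ, F (t, u)) from rfl,
      hfun] at this
    exact (integrable_indicator_iff measurableSet_Ioi).mp this
  have hL : (∫ t : ℝ, ∫ u : ℝ, F (t, u)) =
      ∫ t in Ioi (0:ℝ), (t * Real.exp ((1 - q) * t)) * ∫ u in Ioi (Real.sqrt t), Real.exp (-u ^ 2) := by
    rw [hfun, integral_indicator measurableSet_Ioi]
  have hR : (∫ u : ℝ, ∫ t : ℝ, F (t, u)) =
      ∫ u in Ioi (0:ℝ), Real.exp (-u ^ 2) * ∫ t in Ioo (0:ℝ) (u ^ 2), t * Real.exp ((1 - q) * t) := by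
    rw [← integral_indicator (measurableSet_Ioi)]
    congr 1
    funext u
    by_cases hu : (0:ℝ) < u
    · rw [Set.indicator_of_mem (by exact hu)]
      have : ∀ t : ℝ, F (t, u) =
          (Ioo (0:ℝ) (u ^ 2)).indicator (fun t => (t * Real.exp ((1 - q) * t)) * Real.exp (-u ^ 2)) t := by
        intro t
        by_cases ht : t ∈ Ioo (0:ℝ) (u ^ 2)
        · rw [Set.indicator_of_mem ht, hFdef, Set.indicator_of_mem]
          exact ⟨ht.1, (Real.sqrt_lt' hu).mpr ht.2⟩
        · rw [Set.indicator_of_notMem ht, hFdef, Set.indicator_of_notMem]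
          intro ⟨h1, h2⟩
          exact ht ⟨h1, (Real.sqrt_lt' hu).mp h2⟩
      simp_rw [this]
      rw [integral_indicator measurableSet_Ioo, integral_mul_const, mul_comm]
    · rw [Set.indicator_of_notMem (by exact hu)]
      have : ∀ t : ℝ, F (t, u) = 0 := by
        intro t
        rw [hFdef, Set.indicator_of_notMem]
        intro ⟨h1, h2⟩
        exact hu (lt_of_le_of_lt (Real.sqrt_nonneg _) h2)
      simp [this]
  exact ⟨hInt, by rw [← hL, hswap, hR]⟩

end Aux

open Set in
/-- The function `f(t) = (2/√π)√t − 2t eᵗ erfc(√t)` has Laplace transform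
`∫₀^∞ e^{-qt} f(t) dt = 1/(√q (√q+1)²)` for all `q > 0`. -/
theorem stmt13 (q : ℝ) (hq : 0 < q) :
    ∫ t in Set.Ioi (0 : ℝ),
        Real.exp (-q * t) *
          (2 / Real.sqrt Real.pi * Real.sqrt t - 2 * t * Real.exp t * erfc (Real.sqrt t))
      = 1 / (Real.sqrt q * (Real.sqrt q + 1) ^ 2) := by
  have hπ : (0:ℝ) < Real.sqrt Real.pi := Real.sqrt_pos.mpr Real.pi_pos
  obtain ⟨hInt2, hswap⟩ := swap_lemma q hq
  have h1 : IntegrableOn (fun t : ℝ => Real.sqrt t * Real.exp (-q * t)) (Ioi 0) := by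
    have := integrableOn_rpow_mul_exp_neg_mul_rpow (p := 1) (s := 1/2) (b := q)
      (by norm_num) one_pos hq
    apply this.congr_fun ?_ measurableSet_Ioi
    intro x hx
    dsimp only
    rw [Real.rpow_one, ← Real.sqrt_eq_rpow]
  have hre : EqOn
      (fun t : ℝ => Real.exp (-q*t) *
        (2 / Real.sqrt Real.pi * Real.sqrt t - 2*t*Real.exp t * erfc (Real.sqrt t)))
      (fun t : ℝ => (2 / Real.sqrt Real.pi) * (Real.sqrt t * Real.exp (-q*t))
        - (4 / Real.sqrt Real.pi) *
          ((t * Real.exp ((1-q)*t)) * ∫ u in Ioi (Real.sqrt t), Real.exp (-u^2))) (Ioi 0) := by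
    intro t ht
    simp only [erfc]
    have he : Real.exp ((1-q)*t) = Real.exp (-q*t) * Real.exp t := by
      rw [← Real.exp_add]; ring_nf
    rw [he]; ring
  rw [setIntegral_congr_fun measurableSet_Ioi hre,
    integral_sub (h1.const_mul _) (hInt2.const_mul _),
    integral_const_mul _ _, integral_const_mul _ _, int_sqrt_exp hq, hswap]
  rcases eq_or_ne q 1 with rfl | hq1
  · have hinner : ∀ u : ℝ,
        (∫ t in Ioo (0:ℝ) (u^2), t * Real.exp ((1-(1:ℝ))*t)) = (u^2)^2/2 := by
      intro u
      rw [show (fun t : ℝ => t * Real.exp ((1-(1:ℝ))*t)) = fun t : ℝ => t from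
        funext (fun t => by norm_num)]
      exact int_t_Ioo (sq_nonneg u)
    simp_rw [hinner]
    rw [show (fun u : ℝ => Real.exp (-u^2) * ((u^2)^2/2))
        = fun u : ℝ => (1/2) * (u^4 * Real.exp (-u^2)) from funext (fun u => by ring)]
    rw [integral_const_mul _ _, int_quart_gauss, Real.one_rpow, Real.sqrt_one]
    field_simp
    ring
  · set c : ℝ := 1 - q with hcdef
    have hc : c ≠ 0 := sub_ne_zero.mpr (Ne.symm hq1)
    have hinner : ∀ u : ℝ,
        (∫ t in Ioo (0:ℝ) (u^2), t * Real.exp (c*t))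
          = (Real.exp (c*u^2)*(c*u^2-1)+1)/c^2 :=
      fun u => int_texp hc (sq_nonneg u)
    simp_rw [hinner]
    have hre2 : EqOn
        (fun u : ℝ => Real.exp (-u^2) * ((Real.exp (c*u^2)*(c*u^2-1)+1)/c^2))
        (fun u : ℝ => ((c/c^2) * (u^2*Real.exp (-q*u^2)) - (1/c^2)*Real.exp (-q*u^2))
          + (1/c^2)*Real.exp (-(1:ℝ)*u^2)) (Ioi 0) := by
      intro u hu
      have hE : Real.exp (-q*u^2) = Real.exp (-u^2) * Real.exp (c*u^2) := by
        rw [← Real.exp_add]; congr 1; rw [hcdef]; ring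
      simp only
      rw [hE, show (-(1:ℝ)*u^2) = -u^2 by ring]
      field_simp
    rw [setIntegral_congr_fun measurableSet_Ioi hre2]
    have iA : IntegrableOn (fun u : ℝ => u^2 * Real.exp (-q*u^2)) (Ioi 0) := by
      have := integrableOn_rpow_mul_exp_neg_mul_sq hq (s := 2) (by norm_num)
      apply this.congr_fun ?_ measurableSet_Ioi
      intro x hx
      dsimp only
      norm_num [Real.rpow_natCast]
    have iB : IntegrableOn (fun u : ℝ => Real.exp (-q*u^2)) (Ioi 0) :=
      (integrable_exp_neg_mul_sq hq).integrableOn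
    have iC : IntegrableOn (fun u : ℝ => Real.exp (-(1:ℝ)*u^2)) (Ioi 0) :=
      (integrable_exp_neg_mul_sq one_pos).integrableOn
    have iAB : IntegrableOn (fun u : ℝ =>
        (c/c^2) * (u^2*Real.exp (-q*u^2)) - (1/c^2)*Real.exp (-q*u^2)) (Ioi 0) :=
      (iA.const_mul _).sub (iB.const_mul _)
    rw [integral_add iAB (iC.const_mul _),
      integral_sub (iA.const_mul _) (iB.const_mul _),
      integral_const_mul _ _, integral_const_mul _ _, integral_const_mul _ _,
      int_sq_gauss hq, integral_gaussian_Ioi, integral_gaussian_Ioi]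
    -- arithmetic
    set s : ℝ := Real.sqrt q with hsdef
    have hs : 0 < s := Real.sqrt_pos.mpr hq
    have hsq : s^2 = q := Real.sq_sqrt hq.le
    have hs1 : s ≠ 1 := by
      intro h
      apply hq1
      rw [← hsq, h]; norm_num
    have hq32 : q ^ (-(3/2) : ℝ) = (q * s)⁻¹ := by
      rw [show (-(3/2):ℝ) = (-1) + (-(1/2)) by norm_num, Real.rpow_add hq,
        Real.rpow_neg_one, Real.rpow_neg hq.le, ← Real.sqrt_eq_rpow, ← mul_inv, hsdef]
    have hπq : Real.sqrt (Real.pi / q) = Real.sqrt Real.pi / s :=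
      Real.sqrt_div Real.pi_pos.le q
    have hπ1 : Real.sqrt (Real.pi / 1) = Real.sqrt Real.pi := by norm_num
    rw [hq32, hπq, hπ1, hcdef, ← hsq]
    have hs1' : 1 - s^2 ≠ 0 := by
      rw [hcdef, ← hsq] at hc; exact hc
    have hsp1 : s + 1 ≠ 0 := by positivity
    field_simp
    ring
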